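/- Let A and B be symmetric positive semidefinite d × d real matrices with A ≥ μ I and B ≥ μ I for some μ > 0 (i.e., all eigenvalues at least μ). Then ‖√A − √B‖_HS ≤ ‖A − B‖_HS/(2√μ), where √A denotes the unique symmetric positive semidefinite square root and ‖·‖_HS the Hilbert–Schmidt (Frobenius) norm. -/

import Mathlib

open Matrix

/-- Hilbert–Schmidt (Frobenius) norm of a real matrix. -/
noncomputable def frobNorm {d m : ℕ} (A : Matrix (Fin d) (Fin m) ℝ) : ℝ :=
  Real.sqrt (∑ i, ∑ j, (A i j) ^ 2)

section

open scoped ComplexOrder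

/-- The positive semidefinite square root of a positive semidefinite matrix
(Mathlib's former `Matrix.PosSemidef.sqrt`, removed since; restored with its old definition). -/
noncomputable def Matrix.PosSemidef.sqrt {𝕜 : Type*} [RCLike 𝕜] {n : Type*} [Fintype n]
    [DecidableEq n] {A : Matrix n n 𝕜} (hA : A.PosSemidef) : Matrix n n 𝕜 :=
  hA.1.eigenvectorUnitary.1 * diagonal ((↑) ∘ (Real.sqrt ·) ∘ hA.1.eigenvalues) *
  (star hA.1.eigenvectorUnitary : Matrix n n 𝕜)

end

lemma Matrix.PosSemidef.posSemidef_sqrt {n : Type*} [Fintype n] [DecidableEq n]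
    {A : Matrix n n ℝ} (hA : A.PosSemidef) : hA.sqrt.PosSemidef := by
  unfold Matrix.PosSemidef.sqrt
  exact (PosSemidef.diagonal (by intro i; simp [Real.sqrt_nonneg])).mul_mul_conjTranspose_same _

lemma Matrix.PosSemidef.sqrt_mul_self {n : Type*} [Fintype n] [DecidableEq n]
    {A : Matrix n n ℝ} (hA : A.PosSemidef) : hA.sqrt * hA.sqrt = A := by
  have hU := Unitary.coe_star_mul_self hA.1.eigenvectorUnitary
  have hsp := hA.1.spectral_theorem
  rw [Unitary.conjStarAlgAut_apply] at hsp
  conv_rhs => rw [hsp]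
  unfold Matrix.PosSemidef.sqrt
  simp only [Matrix.mul_assoc]
  rw [← Matrix.mul_assoc (star _ : Matrix n n ℝ) (hA.1.eigenvectorUnitary : Matrix n n ℝ), hU,
    Matrix.one_mul, ← Matrix.mul_assoc (diagonal _), diagonal_mul_diagonal]
  congr 3
  funext i
  simp [Real.mul_self_sqrt (hA.eigenvalues_nonneg i)]

lemma posSemidef_iff_eq_transpose_mul_self {n : Type*} [Fintype n] {M : Matrix n n ℝ} :
    M.PosSemidef ↔ ∃ B : Matrix n n ℝ, M = Bᴴ * B := by
  classical
  open scoped MatrixOrder in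
  constructor
  · intro h
    obtain ⟨B, rfl⟩ := CStarAlgebra.nonneg_iff_eq_star_mul_self.mp h.nonneg
    exact ⟨B, rfl⟩
  · rintro ⟨B, rfl⟩
    exact posSemidef_conjTranspose_mul_self B

set_option linter.unusedSectionVars false
set_option maxHeartbeats 1000000

section Aux
variable {n : Type*} [Fintype n] [DecidableEq n]

lemma trace_conjTranspose_mul_self_nonneg (B : Matrix n n ℝ) :
    0 ≤ trace (Bᴴ * B) := by
  simp only [Matrix.trace, Matrix.diag, Matrix.mul_apply, Matrix.conjTranspose_apply,
    star_trivial]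
  apply Finset.sum_nonneg; intro i _
  apply Finset.sum_nonneg; intro j _
  exact mul_self_nonneg _

lemma trace_nonneg_of_posSemidef {M : Matrix n n ℝ} (hM : M.PosSemidef) :
    0 ≤ trace M := by
  obtain ⟨B, rfl⟩ := posSemidef_iff_eq_transpose_mul_self.mp hM
  exact trace_conjTranspose_mul_self_nonneg B

lemma trace_mul_nonneg_of_posSemidef {P Q : Matrix n n ℝ}
    (hP : P.PosSemidef) (hQ : Q.PosSemidef) : 0 ≤ trace (P * Q) := by
  obtain ⟨C, rfl⟩ := posSemidef_iff_eq_transpose_mul_self.mp hP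
  obtain ⟨D, rfl⟩ := posSemidef_iff_eq_transpose_mul_self.mp hQ
  have : trace ((Cᴴ * C) * (Dᴴ * D)) = trace ((C * Dᴴ)ᴴ * (C * Dᴴ)) := by
    rw [conjTranspose_mul, conjTranspose_conjTranspose]
    rw [show (Cᴴ * C) * (Dᴴ * D) = (Cᴴ * C * Dᴴ) * D by noncomm_ring,
      trace_mul_comm]
    noncomm_ring
  rw [this]
  exact trace_conjTranspose_mul_self_nonneg _

lemma quad_subst (P M : Matrix n n ℝ) (hP : Pᵀ = P) (w : n → ℝ) :
    (P *ᵥ w) ⬝ᵥ ((M * P) *ᵥ w) = w ⬝ᵥ ((P * M * P) *ᵥ w) := by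
  rw [dotProduct_mulVec, vecMul_mulVec, hP, ← dotProduct_mulVec, Matrix.mul_assoc]

/-- `c • 1` is positive definite for `c > 0`. -/
lemma posDef_smul_one {c : ℝ} (hc : 0 < c) :
    (c • (1 : Matrix n n ℝ)).PosDef := by
  have : c • (1 : Matrix n n ℝ) = diagonal (fun _ => c) := by
    ext i j
    by_cases h : i = j <;> simp [h, Matrix.one_apply, diagonal]
  rw [this]
  exact posDef_diagonal_iff.mpr (fun _ => hc)

lemma smul_one_isHermitian {c : ℝ} : (c • (1 : Matrix n n ℝ)).IsHermitian := by
  unfold Matrix.IsHermitian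
  rw [conjTranspose_smul]
  simp

/-- If `S` is PSD and `S² ≥ μ•1` then `S ≥ √μ • 1`. -/
lemma sqrt_lower_bound {S : Matrix n n ℝ} (hS : S.PosSemidef) {μ : ℝ} (hμ : 0 < μ)
    (h : (S * S - μ • (1 : Matrix n n ℝ)).PosSemidef) :
    (S - Real.sqrt μ • (1 : Matrix n n ℝ)).PosSemidef := by
  set c := Real.sqrt μ with hc
  have hc0 : 0 < c := Real.sqrt_pos.mpr hμ
  have hcc : c * c = μ := Real.mul_self_sqrt hμ.le
  set R := hS.sqrt with hR
  have hRpsd : R.PosSemidef := hS.posSemidef_sqrt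
  have hRR : R * R = S := hS.sqrt_mul_self
  have hRt : Rᵀ = R := by
    rw [← conjTranspose_eq_transpose_of_trivial]; exact hRpsd.1
  set Q := S * S - μ • (1 : Matrix n n ℝ) with hQ
  have hRQ : R * Q = Q * R := by
    simp only [hQ, ← hRR, Matrix.mul_sub, Matrix.sub_mul, Matrix.mul_smul, Matrix.smul_mul,
      Matrix.mul_one, Matrix.one_mul, Matrix.mul_assoc]
  set P := S + c • (1 : Matrix n n ℝ) with hP
  have hPd : P.PosDef := Matrix.PosDef.posSemidef_add hS (posDef_smul_one hc0)
  have hPt : Pᵀ = P := by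
    rw [← conjTranspose_eq_transpose_of_trivial]; exact hPd.isHermitian
  have key : P * (S - c • (1 : Matrix n n ℝ)) * P = R * Q * R + c • Q := by
    have h1 : P * (S - c • (1 : Matrix n n ℝ)) = Q := by
      simp only [hP, hQ, Matrix.mul_sub, Matrix.add_mul, Matrix.mul_smul, Matrix.smul_mul,
        Matrix.mul_one, Matrix.one_mul, smul_smul, hcc, smul_add, smul_sub]
      abel
    rw [h1]
    have h2 : Q * P = Q * S + c • Q := by
      simp only [hP, Matrix.mul_add, Matrix.mul_smul, Matrix.mul_one]
    rw [h2]
    congr 1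
    rw [← hRR, ← Matrix.mul_assoc, ← hRQ]
  have hdet : IsUnit P.det := isUnit_iff_ne_zero.mpr hPd.det_pos.ne'
  have hinv : P * P⁻¹ = 1 := Matrix.mul_nonsing_inv P hdet
  refine Matrix.PosSemidef.of_dotProduct_mulVec_nonneg ?_ ?_
  · exact hS.1.sub smul_one_isHermitian
  · intro v
    rw [star_trivial]
    have hv : P *ᵥ (P⁻¹ *ᵥ v) = v := by rw [mulVec_mulVec, hinv, one_mulVec]
    obtain ⟨w, hv⟩ : ∃ w, P *ᵥ w = v := ⟨P⁻¹ *ᵥ v, hv⟩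
    subst hv
    have e1 : (P *ᵥ w) ⬝ᵥ ((S - c • (1 : Matrix n n ℝ)) *ᵥ (P *ᵥ w))
        = w ⬝ᵥ ((R * Q * R) *ᵥ w) + c * (w ⬝ᵥ (Q *ᵥ w)) := by
      rw [mulVec_mulVec, quad_subst P _ hPt w, key, add_mulVec, dotProduct_add,
        smul_mulVec, dotProduct_smul]
      norm_num
    rw [e1]
    have t1 : 0 ≤ w ⬝ᵥ ((R * Q * R) *ᵥ w) := by
      rw [← quad_subst R Q hRt w, ← mulVec_mulVec]
      have := h.dotProduct_mulVec_nonneg (R *ᵥ w)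
      rwa [star_trivial] at this
    have t2 : 0 ≤ w ⬝ᵥ (Q *ᵥ w) := by
      have := h.dotProduct_mulVec_nonneg w
      rwa [star_trivial] at this
    positivity

end Aux

lemma frobNorm_eq_sqrt_trace {d : ℕ} (M : Matrix (Fin d) (Fin d) ℝ) :
    frobNorm M = Real.sqrt (trace (Mᴴ * M)) := by
  unfold frobNorm
  congr 1
  simp only [Matrix.trace, Matrix.diag, Matrix.mul_apply, Matrix.conjTranspose_apply,
    star_trivial, ← pow_two]
  exact Finset.sum_comm

/-- Lipschitz bound for the matrix square root on uniformly positive definite matrices: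
if `A, B` are symmetric positive semidefinite with `A ≥ μ I`, `B ≥ μ I`, `μ > 0`, then
`‖√A - √B‖_HS ≤ ‖A - B‖_HS / (2√μ)`. -/
theorem sqrt_lipschitz_of_posdef
    {d : ℕ} (A B : Matrix (Fin d) (Fin d) ℝ) (μ : ℝ) (hμ : 0 < μ)
    (hA : A.PosSemidef) (hB : B.PosSemidef)
    (hAμ : (A - μ • (1 : Matrix (Fin d) (Fin d) ℝ)).PosSemidef)
    (hBμ : (B - μ • (1 : Matrix (Fin d) (Fin d) ℝ)).PosSemidef) :
    frobNorm (hA.sqrt - hB.sqrt) ≤ frobNorm (A - B) / (2 * Real.sqrt μ) := by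
  set c := Real.sqrt μ with hc
  have hc0 : 0 < c := Real.sqrt_pos.mpr hμ
  have hcc : c * c = μ := Real.mul_self_sqrt hμ.le
  set S := hA.sqrt with hSdef
  set T := hB.sqrt with hTdef
  have hS : S.PosSemidef := hA.posSemidef_sqrt
  have hT : T.PosSemidef := hB.posSemidef_sqrt
  have hSS : S * S = A := hA.sqrt_mul_self
  have hTT : T * T = B := hB.sqrt_mul_self
  set X := S - T with hXdef
  have hXh : Xᴴ = X := by
    rw [hXdef, conjTranspose_sub, hS.1, hT.1]
  -- positive semidefinite auxiliary matrices
  have hS' : (S - c • (1 : Matrix (Fin d) (Fin d) ℝ)).PosSemidef := by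
    apply sqrt_lower_bound hS hμ
    rw [hSS]; exact hAμ
  have hT' : (T - c • (1 : Matrix (Fin d) (Fin d) ℝ)).PosSemidef := by
    apply sqrt_lower_bound hT hμ
    rw [hTT]; exact hBμ
  set S' := S - c • (1 : Matrix (Fin d) (Fin d) ℝ) with hS'def
  set T' := T - c • (1 : Matrix (Fin d) (Fin d) ℝ) with hT'def
  have hXX : (X * X).PosSemidef := by
    have := posSemidef_conjTranspose_mul_self X
    rwa [hXh] at this
  have hXAX : (X * (A - μ • (1 : Matrix (Fin d) (Fin d) ℝ)) * X).PosSemidef := by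
    have := hAμ.mul_mul_conjTranspose_same X
    rwa [hXh] at this
  have hXBX : (X * (B - μ • (1 : Matrix (Fin d) (Fin d) ℝ)) * X).PosSemidef := by
    have := hBμ.mul_mul_conjTranspose_same X
    rwa [hXh] at this
  have hXSX : (X * S' * X).PosSemidef := by
    have := hS'.mul_mul_conjTranspose_same X
    rwa [hXh] at this
  -- scalar traces
  set tX := trace (X * X) with htX
  set tAB := trace ((A - B) * (A - B)) with htAB
  have ha1 : 0 ≤ trace (X * (A - μ • (1 : Matrix (Fin d) (Fin d) ℝ)) * X) :=
    trace_nonneg_of_posSemidef hXAX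
  have hb1 : 0 ≤ trace (X * (B - μ • (1 : Matrix (Fin d) (Fin d) ℝ)) * X) :=
    trace_nonneg_of_posSemidef hXBX
  have hg : 0 ≤ trace (T' * (X * S' * X)) := trace_mul_nonneg_of_posSemidef hT' hXSX
  have hu : 0 ≤ trace (S' * (X * X)) := trace_mul_nonneg_of_posSemidef hS' hXX
  have hv : 0 ≤ trace (T' * (X * X)) := trace_mul_nonneg_of_posSemidef hT' hXX
  have htX0 : 0 ≤ tX := trace_nonneg_of_posSemidef hXX
  -- expansion identities
  have ea1 : trace (X * (A - μ • (1 : Matrix (Fin d) (Fin d) ℝ)) * X)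
      = trace (X * A * X) - μ * tX := by
    have : X * (A - μ • (1 : Matrix (Fin d) (Fin d) ℝ)) * X
        = X * A * X - μ • (X * X) := by
      simp only [Matrix.mul_sub, Matrix.sub_mul, Matrix.mul_smul, Matrix.smul_mul,
        Matrix.mul_one]
    rw [this, trace_sub, trace_smul, smul_eq_mul]
  have eb1 : trace (X * (B - μ • (1 : Matrix (Fin d) (Fin d) ℝ)) * X)
      = trace (X * B * X) - μ * tX := by
    have : X * (B - μ • (1 : Matrix (Fin d) (Fin d) ℝ)) * X
        = X * B * X - μ • (X * X) := by
      simp only [Matrix.mul_sub, Matrix.sub_mul, Matrix.mul_smul, Matrix.smul_mul,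
        Matrix.mul_one]
    rw [this, trace_sub, trace_smul, smul_eq_mul]
  -- cyclic identities
  have cyc1 : trace (X * S * X) = trace (S * (X * X)) := by
    rw [trace_mul_comm (X * S) X, ← Matrix.mul_assoc, trace_mul_comm]
  have eg : trace (T' * (X * S' * X))
      = trace (T * (X * S * X)) - c * trace (T * (X * X)) - c * trace (X * S * X)
        + μ * tX := by
    have hm : T' * (X * S' * X)
        = T * (X * S * X) - c • (T * (X * X)) - c • (X * S * X)
          + (c * c) • (X * X) := by
      rw [hS'def, hT'def]
      simp only [Matrix.mul_sub, Matrix.sub_mul, Matrix.mul_smul, Matrix.smul_mul,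
        Matrix.mul_one, Matrix.one_mul, smul_smul, smul_sub]
      abel
    rw [hm, trace_add, trace_sub, trace_sub, trace_smul, trace_smul, trace_smul,
      smul_eq_mul, smul_eq_mul, smul_eq_mul, hcc]
  have eu : trace (S' * (X * X)) = trace (X * S * X) - c * tX := by
    have hm : S' * (X * X) = S * (X * X) - c • (X * X) := by
      rw [hS'def]
      simp only [Matrix.sub_mul, Matrix.smul_mul, Matrix.one_mul]
    rw [hm, trace_sub, trace_smul, smul_eq_mul, cyc1]
  have ev : trace (T' * (X * X)) = trace (T * (X * X)) - c * tX := by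
    have hm : T' * (X * X) = T * (X * X) - c • (X * X) := by
      rw [hT'def]
      simp only [Matrix.sub_mul, Matrix.smul_mul, Matrix.one_mul]
    rw [hm, trace_sub, trace_smul, smul_eq_mul]
  -- main trace expansion of (A-B)²
  have eAB : tAB = trace (X * A * X) + trace (X * B * X) + 2 * trace (T * (X * S * X)) := by
    have hm : (A - B) * (A - B)
        = X * A * X + (X * S * X) * T + T * (X * S * X) + T * (X * X) * T := by
      rw [← hSS, ← hTT, hXdef]
      noncomm_ring
    rw [htAB, hm, trace_add, trace_add, trace_add]
    have c1 : trace ((X * S * X) * T) = trace (T * (X * S * X)) := trace_mul_comm _ _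
    have c2 : trace (T * (X * X) * T) = trace (X * B * X) := by
      calc trace (T * (X * X) * T) = trace (T * (T * (X * X))) :=
            trace_mul_comm (T * (X * X)) T
        _ = trace ((T * T) * (X * X)) := by rw [← Matrix.mul_assoc]
        _ = trace ((X * X) * B) := by rw [hTT, trace_mul_comm]
        _ = trace (X * (X * B)) := by rw [Matrix.mul_assoc]
        _ = trace (X * B * X) := (trace_mul_comm (X * B) X).symm
    rw [c1, c2]
    ring
  -- the key inequality : 4 μ tX ≤ tAB
  have key : 4 * μ * tX ≤ tAB := by
    have := eg
    nlinarith [ha1, hb1, hg, hu, hv, htX0, ea1, eb1, eg, eu, ev, eAB, hc0, hcc]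
  -- convert to Frobenius norms
  have hABh : (A - B)ᴴ = A - B := by rw [conjTranspose_sub, hA.1, hB.1]
  have f1 : frobNorm X = Real.sqrt tX := by
    rw [frobNorm_eq_sqrt_trace, hXh]
  have f2 : frobNorm (A - B) = Real.sqrt tAB := by
    rw [frobNorm_eq_sqrt_trace, hABh]
  rw [f1, f2, le_div_iff₀ (by positivity : (0:ℝ) < 2 * c)]
  have h4 : Real.sqrt (4 * μ * tX) = (2 * c) * Real.sqrt tX := by
    rw [show 4 * μ = (2 * c) ^ 2 by nlinarith, Real.sqrt_mul (by positivity) tX,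
      Real.sqrt_sq (by positivity)]
  calc Real.sqrt tX * (2 * c) = Real.sqrt (4 * μ * tX) := by rw [h4]; ring
    _ ≤ Real.sqrt tAB := Real.sqrt_le_sqrt key
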